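/- Let x, y ∈ ℝ^d, let K(x,y) = w(x)w(y)(2π[σ²(x)+σ²(y)])^{-d/2} φ(|x-y|/√(σ²(x)+σ²(y))) with φ(r) = ∫ e^{-r²/(2χ(t)²)} u(t) dt for functions χ: ℝ→(0,∞) and u: ℝ→[0,∞). Define B_t(x,z) = w(x)[2πσ²(x)]^{-d/2} exp(-|x-z|²/(2σ(x)²χ(t)²)) and v(t) = χ(t)^{-d}u(t). Then K(x,y) = ∫_ℝ (∫_{ℝ^d} B_t(x,z)B_t(y,z) dz) v(t) dt, i.e., K = ∫ B_t B_t* v(t) dt. -/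

import Mathlib

open MeasureTheory


lemma norm_identity17 {d : ℕ} (A B : ℝ) (hA : 0 < A) (hB : 0 < B)
    (x y z : EuclideanSpace ℝ (Fin d)) :
    ‖x - z‖^2 / (2*A) + ‖y - z‖^2 / (2*B)
      = ((A+B)/(2*A*B)) * ‖z - ((B/(A+B)) • x + (A/(A+B)) • y)‖^2
        + ‖x - y‖^2 / (2*(A+B)) := by
  have hAB : 0 < A + B := by linarith
  have key : B*(A+B)*‖x - z‖^2 + A*(A+B)*‖y - z‖^2
      = (A+B)^2 * ‖z - ((B/(A+B)) • x + (A/(A+B)) • y)‖^2 + A*B*‖x - y‖^2 := by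
    have h2 : (A+B)^2 * ‖z - ((B/(A+B)) • x + (A/(A+B)) • y)‖^2
        = ‖(A+B) • z - B • x - A • y‖^2 := by
      rw [show (A+B) • z - B • x - A • y
            = (A+B) • (z - ((B/(A+B)) • x + (A/(A+B)) • y)) by
          rw [smul_sub, smul_add, smul_smul, smul_smul]
          field_simp
          abel]
      rw [norm_smul, mul_pow, Real.norm_eq_abs, sq_abs]
    rw [h2]
    simp only [@norm_sub_sq_real, @norm_smul, real_inner_smul_left, real_inner_smul_right,
      inner_sub_left, inner_sub_right, real_inner_self_eq_norm_sq, norm_smul,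
      Real.norm_eq_abs, mul_pow, sq_abs, real_inner_comm x y,
      real_inner_comm z x, real_inner_comm z y]
    ring
  rw [div_add_div _ _ (by positivity : (2*A) ≠ 0) (by positivity : (2*B) ≠ 0),
    div_mul_eq_mul_div, div_add_div _ _ (by positivity : (2*A*B) ≠ 0)
      (by positivity : (2*(A+B)) ≠ 0),
    div_eq_div_iff (by positivity) (by positivity)]
  linear_combination (8*A*B) * key

lemma gauss_prod17 {d : ℕ} (A B : ℝ) (hA : 0 < A) (hB : 0 < B)
    (x y : EuclideanSpace ℝ (Fin d)) :
    ∫ z : EuclideanSpace ℝ (Fin d),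
        Real.exp (-‖x - z‖^2 / (2*A)) * Real.exp (-‖y - z‖^2 / (2*B))
      = (2*Real.pi*A*B/(A+B)) ^ ((d:ℝ)/2) * Real.exp (-‖x - y‖^2 / (2*(A+B))) := by
  have hAB : 0 < A + B := by linarith
  set m : EuclideanSpace ℝ (Fin d) := (B/(A+B)) • x + (A/(A+B)) • y with hm
  set c : ℝ := (A+B)/(2*A*B) with hc
  have hcpos : 0 < c := by positivity
  have step : ∀ z : EuclideanSpace ℝ (Fin d),
      Real.exp (-‖x - z‖^2 / (2*A)) * Real.exp (-‖y - z‖^2 / (2*B))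
        = Real.exp (-‖x - y‖^2 / (2*(A+B))) * Real.exp (-c * ‖z - m‖^2) := by
    intro z
    rw [← Real.exp_add, ← Real.exp_add]
    congr 1
    have := norm_identity17 A B hA hB x y z
    rw [neg_div, neg_div, neg_div, neg_mul]
    linarith [this]
  simp_rw [step]
  rw [integral_const_mul]
  have htrans : ∫ z : EuclideanSpace ℝ (Fin d), Real.exp (-c * ‖z - m‖^2)
      = ∫ z : EuclideanSpace ℝ (Fin d), Real.exp (-c * ‖z‖^2) := by
    exact integral_sub_right_eq_self (fun z => Real.exp (-c * ‖z‖^2)) m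
  rw [htrans, GaussianFourier.integral_rexp_neg_mul_sq_norm hcpos]
  have hrank : (Module.finrank ℝ (EuclideanSpace ℝ (Fin d)) : ℝ) = (d : ℝ) := by
    simp [finrank_euclideanSpace]
  rw [hrank]
  have hπc : Real.pi / c = 2*Real.pi*A*B/(A+B) := by
    rw [hc]
    field_simp
  rw [hπc, mul_comm]

lemma scalar17 (d : ℕ) (P Q C : ℝ) (hP : 0 < P) (hQ : 0 < Q) (hC : 0 < C) :
    (2*Real.pi*P) ^ (-(d:ℝ)/2) * (2*Real.pi*Q) ^ (-(d:ℝ)/2)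
      * (2*Real.pi*(P*C^2)*(Q*C^2)/(P*C^2+Q*C^2)) ^ ((d:ℝ)/2) * C ^ (-(d:ℝ))
    = (2*Real.pi*(P+Q)) ^ (-(d:ℝ)/2) := by
  have hπ := Real.pi_pos
  have h1 : (2*Real.pi*P) ^ (-(d:ℝ)/2) = ((2*Real.pi*P)⁻¹) ^ ((d:ℝ)/2) := by
    rw [Real.inv_rpow (by positivity), ← Real.rpow_neg (by positivity), neg_div]
  have h2 : (2*Real.pi*Q) ^ (-(d:ℝ)/2) = ((2*Real.pi*Q)⁻¹) ^ ((d:ℝ)/2) := by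
    rw [Real.inv_rpow (by positivity), ← Real.rpow_neg (by positivity), neg_div]
  have h3 : C ^ (-(d:ℝ)) = ((C^2)⁻¹) ^ ((d:ℝ)/2) := by
    rw [Real.inv_rpow (by positivity), ← Real.rpow_natCast C 2, ← Real.rpow_mul hC.le,
      ← Real.rpow_neg hC.le]
    norm_num
    ring_nf
    rw [Real.rpow_neg hC.le, Real.rpow_natCast, inv_pow]
  have h4 : (2*Real.pi*(P+Q)) ^ (-(d:ℝ)/2) = ((2*Real.pi*(P+Q))⁻¹) ^ ((d:ℝ)/2) := by
    rw [Real.inv_rpow (by positivity), ← Real.rpow_neg (by positivity), neg_div]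
  rw [h1, h2, h3, h4, ← Real.mul_rpow (by positivity) (by positivity),
    ← Real.mul_rpow (by positivity) (by positivity),
    ← Real.mul_rpow (by positivity) (by positivity)]
  congr 1
  field_simp

/-- Exact integral presentation of the non-stationary isotropic kernel:
`K(x,y) = ∫_ℝ (∫_{ℝ^d} B_t(x,z) B_t(y,z) dz) v(t) dt`, where
`B_t(x,z) = w(x)[2πσ²(x)]^{-d/2} exp(-|x-z|²/(2σ(x)²χ(t)²))`, `v(t) = χ(t)^{-d}u(t)`,
and `K(x,y) = w(x)w(y)(2π[σ²(x)+σ²(y)])^{-d/2} φ(|x-y|/√(σ²(x)+σ²(y)))` with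
`φ(r) = ∫ e^{-r²/(2χ(t)²)} u(t) dt`. -/
theorem stmt17 (d : ℕ) (σ w : EuclideanSpace ℝ (Fin d) → ℝ) (χ u : ℝ → ℝ)
    (hσ : ∀ x, 0 < σ x) (hw : ∀ x, 0 ≤ w x) (hχ : ∀ t, 0 < χ t) (hu : ∀ t, 0 ≤ u t)
    (φ : ℝ → ℝ) (hφ : ∀ r, φ r = ∫ t : ℝ, Real.exp (-r^2 / (2 * (χ t)^2)) * u t)
    (x y : EuclideanSpace ℝ (Fin d)) :
    w x * w y * (2 * Real.pi * ((σ x)^2 + (σ y)^2)) ^ (-(d : ℝ) / 2)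
        * φ (‖x - y‖ / Real.sqrt ((σ x)^2 + (σ y)^2))
      = ∫ t : ℝ,
          (∫ z : EuclideanSpace ℝ (Fin d),
              (w x * (2 * Real.pi * (σ x)^2) ^ (-(d : ℝ) / 2)
                  * Real.exp (-‖x - z‖^2 / (2 * (σ x)^2 * (χ t)^2)))
                * (w y * (2 * Real.pi * (σ y)^2) ^ (-(d : ℝ) / 2)
                  * Real.exp (-‖y - z‖^2 / (2 * (σ y)^2 * (χ t)^2))))
            * ((χ t) ^ (-(d : ℝ)) * u t) := by
  set P := (σ x)^2 with hP
  set Q := (σ y)^2 with hQ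
  have hPpos : 0 < P := pow_pos (hσ x) 2
  have hQpos : 0 < Q := pow_pos (hσ y) 2
  have hSpos : 0 < P + Q := by linarith
  set Cx := (2*Real.pi*P) ^ (-(d:ℝ)/2) with hCx
  set Cy := (2*Real.pi*Q) ^ (-(d:ℝ)/2) with hCy
  have key : ∀ t : ℝ,
      (∫ z : EuclideanSpace ℝ (Fin d),
          (w x * Cx * Real.exp (-‖x - z‖^2 / (2 * P * (χ t)^2)))
            * (w y * Cy * Real.exp (-‖y - z‖^2 / (2 * Q * (χ t)^2))))
        * ((χ t) ^ (-(d : ℝ)) * u t)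
      = (w x * w y * (2 * Real.pi * (P + Q)) ^ (-(d:ℝ)/2))
          * (Real.exp (-(‖x - y‖ / Real.sqrt (P + Q))^2 / (2 * (χ t)^2)) * u t) := by
    intro t
    have hCpos : 0 < χ t := hχ t
    have hA : 0 < P * (χ t)^2 := by positivity
    have hB : 0 < Q * (χ t)^2 := by positivity
    have hinner : (∫ z : EuclideanSpace ℝ (Fin d),
          (w x * Cx * Real.exp (-‖x - z‖^2 / (2 * P * (χ t)^2)))
            * (w y * Cy * Real.exp (-‖y - z‖^2 / (2 * Q * (χ t)^2))))
        = (w x * Cx * (w y * Cy)) *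
            ((2*Real.pi*(P*(χ t)^2)*(Q*(χ t)^2)/(P*(χ t)^2 + Q*(χ t)^2)) ^ ((d:ℝ)/2)
              * Real.exp (-‖x - y‖^2 / (2 * (P*(χ t)^2 + Q*(χ t)^2)))) := by
      have e1 : ∀ z : EuclideanSpace ℝ (Fin d),
          (w x * Cx * Real.exp (-‖x - z‖^2 / (2 * P * (χ t)^2)))
            * (w y * Cy * Real.exp (-‖y - z‖^2 / (2 * Q * (χ t)^2)))
          = (w x * Cx * (w y * Cy)) *
              (Real.exp (-‖x - z‖^2 / (2 * (P * (χ t)^2)))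
                * Real.exp (-‖y - z‖^2 / (2 * (Q * (χ t)^2)))) := by
        intro z
        rw [show 2 * P * (χ t)^2 = 2 * (P * (χ t)^2) by ring,
          show 2 * Q * (χ t)^2 = 2 * (Q * (χ t)^2) by ring]
        ring
      simp_rw [e1]
      rw [integral_const_mul, gauss_prod17 _ _ hA hB]
    rw [hinner]
    have hexp : -(‖x - y‖ / Real.sqrt (P + Q))^2 / (2 * (χ t)^2)
        = -‖x - y‖^2 / (2 * (P*(χ t)^2 + Q*(χ t)^2)) := by
      have h2 : 2 * (P*(χ t)^2 + Q*(χ t)^2) = (P+Q) * (2 * (χ t)^2) := by ring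
      rw [div_pow, Real.sq_sqrt hSpos.le, h2, neg_div, neg_div, div_div]
    rw [hexp]
    have hs := scalar17 d P Q (χ t) hPpos hQpos hCpos
    calc (w x * Cx * (w y * Cy)) *
            ((2*Real.pi*(P*(χ t)^2)*(Q*(χ t)^2)/(P*(χ t)^2 + Q*(χ t)^2)) ^ ((d:ℝ)/2)
              * Real.exp (-‖x - y‖^2 / (2 * (P*(χ t)^2 + Q*(χ t)^2))))
          * ((χ t) ^ (-(d : ℝ)) * u t)
        = (w x * w y) * (Cx * Cy
            * (2*Real.pi*(P*(χ t)^2)*(Q*(χ t)^2)/(P*(χ t)^2 + Q*(χ t)^2)) ^ ((d:ℝ)/2)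
            * (χ t) ^ (-(d : ℝ)))
            * (Real.exp (-‖x - y‖^2 / (2 * (P*(χ t)^2 + Q*(χ t)^2))) * u t) := by ring
      _ = _ := by rw [hCx, hCy, hs]
  simp_rw [key]
  rw [integral_const_mul, ← hφ]
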